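/- In the electricity pool model (P2), the upper bound of MCI, UBMCI(E) = a·max_{1 ≤ t ≤ T} g*_t(E) + b, is monotonically non-increasing in E on [0, ∞); equivalently, the map E ↦ max_t g*_t(E) is non-increasing. -/

import Mathlib

open Finset Filter

/-- Feasibility for the electricity pool model (P2) at storage capacity `E`:
the states of charge `x_k = E/2 + ∑_{t ≤ k} u t` (with `x_0 = E/2`) satisfy
`0 ≤ x_k ≤ E` for all `k`, and the terminal condition `x_T = E/2` holds. -/
def poolFeasible (T : ℕ) (E : ℝ) (u : Fin T → ℝ) : Prop :=
  (∀ k : Fin T, 0 ≤ E / 2 + ∑ t ∈ Finset.Iic k, u t) ∧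
  (∀ k : Fin T, E / 2 + ∑ t ∈ Finset.Iic k, u t ≤ E) ∧
  E / 2 + ∑ t, u t = E / 2

/-- Total generation cost `∑ t C (d t + u t)` with `C g = (1/2)·a·g² + b·g + c`. -/
noncomputable def poolCost (T : ℕ) (a b c : ℝ) (d u : Fin T → ℝ) : ℝ :=
  ∑ t, ((1 / 2) * a * (d t + u t) ^ 2 + b * (d t + u t) + c)

/-- Optimal cost `C*(E)` of the pool model (P2). -/
noncomputable def poolCstar (T : ℕ) (a b c : ℝ) (d : Fin T → ℝ) (E : ℝ) : ℝ :=
  sInf {y : ℝ | ∃ u : Fin T → ℝ, poolFeasible T E u ∧ y = poolCost T a b c d u}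

namespace PoolAux

/-- Cumulative sum of the first `n` controls. -/
noncomputable def pcum (T : ℕ) (u : Fin T → ℝ) (n : ℕ) : ℝ :=
  ∑ t ∈ Finset.univ.filter (fun t : Fin T => (t : ℕ) < n), u t

lemma pcum_zero (T : ℕ) (u : Fin T → ℝ) : pcum T u 0 = 0 := by simp [pcum]

lemma pcum_succ (T : ℕ) (u : Fin T → ℝ) {n : ℕ} (h : n < T) :
    pcum T u (n+1) = pcum T u n + u ⟨n, h⟩ := by
  unfold pcum
  have hins : (Finset.univ.filter (fun t : Fin T => (t : ℕ) < n+1)) =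
      insert ⟨n, h⟩ (Finset.univ.filter (fun t : Fin T => (t : ℕ) < n)) := by
    ext t
    simp [Fin.ext_iff]
    omega
  rw [hins, Finset.sum_insert (by simp)]
  ring

lemma pcum_total (T : ℕ) (u : Fin T → ℝ) : pcum T u T = ∑ t, u t := by
  unfold pcum
  rw [Finset.filter_true_of_mem (fun t _ => t.isLt)]

lemma sum_Iic (T : ℕ) (u : Fin T → ℝ) (k : Fin T) :
    ∑ t ∈ Finset.Iic k, u t = pcum T u (k.1 + 1) := by
  unfold pcum
  congr 1
  ext t
  simp only [Finset.mem_Iic, Finset.mem_filter, Finset.mem_univ, true_and, Fin.le_def]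
  omega

lemma feas_lower {T : ℕ} {E : ℝ} {u : Fin T → ℝ} (h : poolFeasible T E u) (k : Fin T) :
    -(E/2) ≤ pcum T u (k.1 + 1) := by
  have := h.1 k; rw [sum_Iic] at this; linarith

lemma feas_upper {T : ℕ} {E : ℝ} {u : Fin T → ℝ} (h : poolFeasible T E u) (k : Fin T) :
    pcum T u (k.1 + 1) ≤ E/2 := by
  have := h.2.1 k; rw [sum_Iic] at this; linarith

lemma feas_total {T : ℕ} {E : ℝ} {u : Fin T → ℝ} (h : poolFeasible T E u) :
    pcum T u T = 0 := by
  rw [pcum_total]; have := h.2.2; linarith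

/-- Move `ε` units of generation from time `t₀` to time `s`. -/
def perturb (T : ℕ) (u : Fin T → ℝ) (s t₀ : Fin T) (ε : ℝ) : Fin T → ℝ :=
  fun t => u t + (if t = s then ε else 0) - (if t = t₀ then ε else 0)

lemma pcum_perturb (T : ℕ) (u : Fin T → ℝ) (s t₀ : Fin T) (ε : ℝ) (n : ℕ) :
    pcum T (perturb T u s t₀ ε) n =
      pcum T u n + (if (s:ℕ) < n then ε else 0) - (if (t₀:ℕ) < n then ε else 0) := by
  unfold pcum perturb
  rw [Finset.sum_sub_distrib, Finset.sum_add_distrib, Finset.sum_ite_eq', Finset.sum_ite_eq']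
  simp

lemma cost_perturb (T : ℕ) (a b c : ℝ) (d u : Fin T → ℝ) (s t₀ : Fin T) (hne : s ≠ t₀)
    (ε : ℝ) :
    poolCost T a b c d (perturb T u s t₀ ε) =
      poolCost T a b c d u + a * ε * ((d s + u s) - (d t₀ + u t₀) + ε) := by
  set v := perturb T u s t₀ ε with hv
  have hdiff : poolCost T a b c d v - poolCost T a b c d u =
      ∑ t, (((1 / 2) * a * (d t + v t) ^ 2 + b * (d t + v t) + c)
        - ((1 / 2) * a * (d t + u t) ^ 2 + b * (d t + u t) + c)) := by
    unfold poolCost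
    rw [Finset.sum_sub_distrib]
  have hzero : ∀ t ∈ Finset.univ \ ({s, t₀} : Finset (Fin T)),
      (((1 / 2) * a * (d t + v t) ^ 2 + b * (d t + v t) + c)
        - ((1 / 2) * a * (d t + u t) ^ 2 + b * (d t + u t) + c)) = 0 := by
    intro t ht
    simp only [Finset.mem_sdiff, Finset.mem_insert, Finset.mem_singleton, not_or] at ht
    have : v t = u t := by simp [hv, perturb, ht.2.1, ht.2.2]
    rw [this]; ring
  have hsum : ∑ t, (((1 / 2) * a * (d t + v t) ^ 2 + b * (d t + v t) + c)
        - ((1 / 2) * a * (d t + u t) ^ 2 + b * (d t + u t) + c)) =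
      ∑ t ∈ ({s, t₀} : Finset (Fin T)),
        (((1 / 2) * a * (d t + v t) ^ 2 + b * (d t + v t) + c)
        - ((1 / 2) * a * (d t + u t) ^ 2 + b * (d t + u t) + c)) :=
    (Finset.sum_subset (Finset.subset_univ _)
      (fun t _ ht => hzero t (Finset.mem_sdiff.mpr ⟨Finset.mem_univ t, ht⟩))).symm
  have hvs : v s = u s + ε := by simp [hv, perturb, hne]
  have hvt : v t₀ = u t₀ - ε := by simp [hv, perturb, (Ne.symm hne)]
  rw [hsum, Finset.sum_pair hne, hvs, hvt] at hdiff
  nlinarith [hdiff]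

/-- If some feasible perturbation moves generation from a strictly more expensive
time `t₀` to a cheaper time `s`, then `u` cannot be optimal. -/
lemma no_better (T : ℕ) (a b c : ℝ) (ha : 0 < a) (d : Fin T → ℝ) (E : ℝ) (u : Fin T → ℝ)
    (hopt : ∀ v, poolFeasible T E v → poolCost T a b c d u ≤ poolCost T a b c d v)
    (s t₀ : Fin T) (hne : s ≠ t₀) (hlt : d s + u s < d t₀ + u t₀)
    (δ : ℝ) (hδ : 0 < δ)
    (hfeas : ∀ ε : ℝ, 0 < ε → ε ≤ δ → poolFeasible T E (perturb T u s t₀ ε)) : False := by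
  set ε := min δ ((d t₀ + u t₀ - (d s + u s))/2) with hε
  have hε0 : 0 < ε := lt_min hδ (by linarith)
  have h1 := hopt _ (hfeas ε hε0 (min_le_left _ _))
  rw [cost_perturb T a b c d u s t₀ hne ε] at h1
  have h2 : ε ≤ (d t₀ + u t₀ - (d s + u s))/2 := min_le_right _ _
  have h3 : (d s + u s) - (d t₀ + u t₀) + ε < 0 := by linarith
  have h4 : a * ε * ((d s + u s) - (d t₀ + u t₀) + ε) < 0 :=
    mul_neg_of_pos_of_neg (mul_pos ha hε0) h3
  linarith

/-- Key lemma: the peak of the optimal generation profile at capacity `E₂` is at most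
the peak of any profile feasible at capacity `E₁ ≤ E₂`. (Contradiction form.) -/
lemma peak (T : ℕ) (a b c : ℝ) (ha : 0 < a) (d : Fin T → ℝ) (E₁ E₂ : ℝ) (hE : E₁ ≤ E₂)
    (u₁ u₂ : Fin T → ℝ) (h₁ : poolFeasible T E₁ u₁) (h₂ : poolFeasible T E₂ u₂)
    (hopt : ∀ v, poolFeasible T E₂ v → poolCost T a b c d u₂ ≤ poolCost T a b c d v)
    (t₀ : Fin T) (hmax : ∀ t, d t + u₁ t < d t₀ + u₂ t₀) : False := by
  classical
  set φ : ℕ → ℝ := fun n => pcum T u₂ n - pcum T u₁ n with hφ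
  have hφ0 : φ 0 = 0 := by simp [hφ, pcum_zero]
  have hφT : φ T = 0 := by simp [hφ, feas_total h₁, feas_total h₂]
  have hstep : ∀ k : Fin T, φ (k.1+1) = φ k.1 + (u₂ k - u₁ k) := by
    intro k
    simp only [hφ, pcum_succ T _ k.isLt, Fin.eta]
    ring
  have ht0pos : 0 < u₂ t₀ - u₁ t₀ := by have := hmax t₀; linarith
  by_cases hA : 0 < φ (t₀.1 + 1)
  · -- Case A: the cumulative difference is positive just after t₀.
    have hex : ∃ j, φ (t₀.1 + 1 + j) ≤ 0 := by
      refine ⟨T - (t₀.1 + 1), ?_⟩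
      have h' : t₀.1 + 1 + (T - (t₀.1 + 1)) = T := by have := t₀.isLt; omega
      rw [h', hφT]
    set m := Nat.find hex with hm
    have hmspec : φ (t₀.1 + 1 + m) ≤ 0 := Nat.find_spec hex
    have hmid : ∀ j < m, 0 < φ (t₀.1 + 1 + j) := by
      intro j hj
      have := Nat.find_min hex hj
      push_neg at this
      simpa using this
    have hm0 : 0 < m := by
      rcases Nat.eq_zero_or_pos m with h | h
      · exfalso; rw [h] at hmspec; simp at hmspec; linarith
      · exact h
    have hmle : m ≤ T - (t₀.1 + 1) := Nat.find_le (by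
      have h' : t₀.1 + 1 + (T - (t₀.1 + 1)) = T := by have := t₀.isLt; omega
      rw [h', hφT])
    have hsT : t₀.1 + m < T := by have := t₀.isLt; omega
    set s : Fin T := ⟨t₀.1 + m, hsT⟩ with hs
    have hsv : (s : ℕ) = t₀.1 + m := rfl
    have hφs1 : 0 < φ (t₀.1 + m) := by
      have := hmid (m - 1) (by omega)
      have h' : t₀.1 + 1 + (m - 1) = t₀.1 + m := by omega
      rwa [h'] at this
    have hφs2 : φ (t₀.1 + m + 1) ≤ 0 := by
      have h' : t₀.1 + 1 + m = t₀.1 + m + 1 := by omega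
      rwa [h'] at hmspec
    have hsstep := hstep s
    rw [hsv] at hsstep
    have hus : u₂ s - u₁ s < 0 := by linarith
    have hlt : d s + u₂ s < d t₀ + u₂ t₀ := by have := hmax s; linarith
    have hne : s ≠ t₀ := Fin.ne_of_val_ne (by rw [hsv]; omega)
    set B : Finset (Fin T) := Finset.univ.filter (fun k => t₀.1 ≤ k.1 ∧ k.1 < (s:ℕ)) with hB
    have ht₀B : t₀ ∈ B := by
      simp only [hB, Finset.mem_filter, Finset.mem_univ, true_and, hsv]
      omega
    have hBne : B.Nonempty := ⟨t₀, ht₀B⟩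
    have hmidk : ∀ k ∈ B, 0 < φ (k.1 + 1) := by
      intro k hk
      simp only [hB, Finset.mem_filter, Finset.mem_univ, true_and, hsv] at hk
      have := hmid (k.1 - t₀.1) (by omega)
      have h' : t₀.1 + 1 + (k.1 - t₀.1) = k.1 + 1 := by omega
      rwa [h'] at this
    set δ := B.inf' hBne (fun k => pcum T u₂ (k.1+1) + E₂/2) with hδdef
    have hδpos : 0 < δ := by
      rw [hδdef, Finset.lt_inf'_iff]
      intro k hk
      have hk1 := hmidk k hk
      have hk2 := feas_lower h₁ k
      simp only [hφ] at hk1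
      linarith
    refine no_better T a b c ha d E₂ u₂ hopt s t₀ hne hlt δ hδpos ?_
    intro ε hε hεδ
    have hpc : ∀ k : Fin T, ∑ t ∈ Finset.Iic k, perturb T u₂ s t₀ ε t
        = pcum T u₂ (k.1+1) + (if (s:ℕ) < k.1+1 then ε else 0)
          - (if (t₀:ℕ) < k.1+1 then ε else 0) := by
      intro k; rw [sum_Iic, pcum_perturb]
    have hbnd : ∀ k : Fin T, -(E₂/2) ≤ ∑ t ∈ Finset.Iic k, perturb T u₂ s t₀ ε t ∧
        ∑ t ∈ Finset.Iic k, perturb T u₂ s t₀ ε t ≤ E₂/2 := by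
      intro k
      rw [hpc k]
      have hl2 := feas_lower h₂ k
      have hu2 := feas_upper h₂ k
      by_cases hks : (s:ℕ) < k.1+1
      · have hkt : (t₀:ℕ) < k.1+1 := by rw [hsv] at hks; omega
        rw [if_pos hks, if_pos hkt]
        constructor <;> linarith
      · by_cases hkt : (t₀:ℕ) < k.1+1
        · rw [if_neg hks, if_pos hkt]
          have hkB : k ∈ B := by
            simp only [hB, Finset.mem_filter, Finset.mem_univ, true_and]
            omega
          have hinf := Finset.inf'_le (fun k => pcum T u₂ (k.1+1) + E₂/2) hkB
          rw [← hδdef] at hinf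
          constructor <;> linarith
        · rw [if_neg hks, if_neg hkt]
          constructor <;> linarith
    refine ⟨fun k => by have := (hbnd k).1; linarith,
            fun k => by have := (hbnd k).2; linarith, ?_⟩
    have htot : ∑ t, perturb T u₂ s t₀ ε t = 0 := by
      have h' := pcum_perturb T u₂ s t₀ ε T
      rw [pcum_total, pcum_total, if_pos s.isLt, if_pos t₀.isLt] at h'
      have h'' := feas_total h₂
      rw [pcum_total] at h''
      rw [h', h'']
      ring
    rw [htot]
    ring
  · -- Case B: the cumulative difference is negative just before t₀.
    push_neg at hA
    have hφt0 : φ t₀.1 < 0 := by have := hstep t₀; linarith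
    have hex : ∃ j, 0 ≤ φ (t₀.1 - j) := ⟨t₀.1, by simp [hφ0]⟩
    set m := Nat.find hex with hm
    have hmspec : 0 ≤ φ (t₀.1 - m) := Nat.find_spec hex
    have hmid : ∀ j < m, φ (t₀.1 - j) < 0 := by
      intro j hj
      have := Nat.find_min hex hj
      push_neg at this
      simpa using this
    have hm0 : 0 < m := by
      rcases Nat.eq_zero_or_pos m with h | h
      · exfalso; rw [h] at hmspec; simp at hmspec; linarith
      · exact h
    have hmle : m ≤ t₀.1 := Nat.find_le (by simp [hφ0])
    have hsT : t₀.1 - m < T := by have := t₀.isLt; omega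
    set s : Fin T := ⟨t₀.1 - m, hsT⟩ with hs
    have hsv : (s : ℕ) = t₀.1 - m := rfl
    have hφs2 : φ (t₀.1 - m + 1) < 0 := by
      have := hmid (m - 1) (by omega)
      have h' : t₀.1 - (m - 1) = t₀.1 - m + 1 := by omega
      rwa [h'] at this
    have hsstep := hstep s
    rw [hsv] at hsstep
    have hus : u₂ s - u₁ s < 0 := by linarith
    have hlt : d s + u₂ s < d t₀ + u₂ t₀ := by have := hmax s; linarith
    have hne : s ≠ t₀ := Fin.ne_of_val_ne (by rw [hsv]; omega)
    set B : Finset (Fin T) := Finset.univ.filter (fun k => (s:ℕ) ≤ k.1 ∧ k.1 < t₀.1) with hB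
    have hsB : s ∈ B := by
      simp only [hB, Finset.mem_filter, Finset.mem_univ, true_and, hsv]
      omega
    have hBne : B.Nonempty := ⟨s, hsB⟩
    have hmidk : ∀ k ∈ B, φ (k.1 + 1) < 0 := by
      intro k hk
      simp only [hB, Finset.mem_filter, Finset.mem_univ, true_and, hsv] at hk
      have := hmid (t₀.1 - (k.1 + 1)) (by omega)
      have h' : t₀.1 - (t₀.1 - (k.1 + 1)) = k.1 + 1 := by omega
      rwa [h'] at this
    set δ := B.inf' hBne (fun k => E₂/2 - pcum T u₂ (k.1+1)) with hδdef
    have hδpos : 0 < δ := by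
      rw [hδdef, Finset.lt_inf'_iff]
      intro k hk
      have hk1 := hmidk k hk
      have hk2 := feas_upper h₁ k
      simp only [hφ] at hk1
      linarith
    refine no_better T a b c ha d E₂ u₂ hopt s t₀ hne hlt δ hδpos ?_
    intro ε hε hεδ
    have hpc : ∀ k : Fin T, ∑ t ∈ Finset.Iic k, perturb T u₂ s t₀ ε t
        = pcum T u₂ (k.1+1) + (if (s:ℕ) < k.1+1 then ε else 0)
          - (if (t₀:ℕ) < k.1+1 then ε else 0) := by
      intro k; rw [sum_Iic, pcum_perturb]
    have hbnd : ∀ k : Fin T, -(E₂/2) ≤ ∑ t ∈ Finset.Iic k, perturb T u₂ s t₀ ε t ∧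
        ∑ t ∈ Finset.Iic k, perturb T u₂ s t₀ ε t ≤ E₂/2 := by
      intro k
      rw [hpc k]
      have hl2 := feas_lower h₂ k
      have hu2 := feas_upper h₂ k
      by_cases hkt : (t₀:ℕ) < k.1+1
      · have hks : (s:ℕ) < k.1+1 := by rw [hsv]; omega
        rw [if_pos hks, if_pos hkt]
        constructor <;> linarith
      · by_cases hks : (s:ℕ) < k.1+1
        · rw [if_pos hks, if_neg hkt]
          have hkB : k ∈ B := by
            simp only [hB, Finset.mem_filter, Finset.mem_univ, true_and]
            omega
          have hinf := Finset.inf'_le (fun k => E₂/2 - pcum T u₂ (k.1+1)) hkB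
          rw [← hδdef] at hinf
          constructor <;> linarith
        · rw [if_neg hks, if_neg hkt]
          constructor <;> linarith
    refine ⟨fun k => by have := (hbnd k).1; linarith,
            fun k => by have := (hbnd k).2; linarith, ?_⟩
    have htot : ∑ t, perturb T u₂ s t₀ ε t = 0 := by
      have h' := pcum_perturb T u₂ s t₀ ε T
      rw [pcum_total, pcum_total, if_pos s.isLt, if_pos t₀.isLt] at h'
      have h'' := feas_total h₂
      rw [pcum_total] at h''
      rw [h', h'']
      ring
    rw [htot]
    ring

lemma cost_bdd (T : ℕ) (a b c : ℝ) (ha : 0 < a) (d : Fin T → ℝ) (E : ℝ) :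
    BddBelow {y : ℝ | ∃ u : Fin T → ℝ, poolFeasible T E u ∧ y = poolCost T a b c d u} := by
  refine ⟨(T:ℝ) * (c - b^2/(2*a)), ?_⟩
  rintro y ⟨u, -, rfl⟩
  unfold poolCost
  have hterm : ∀ t : Fin T,
      c - b^2/(2*a) ≤ (1/2)*a*(d t + u t)^2 + b*(d t + u t) + c := by
    intro t
    have hD : 2*a*(b^2/(2*a)) = b^2 := by field_simp
    nlinarith [sq_nonneg (a*(d t + u t) + b), ha]
  calc (T:ℝ) * (c - b^2/(2*a)) = ∑ _t : Fin T, (c - b^2/(2*a)) := by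
        simp [Finset.sum_const, Finset.card_univ, nsmul_eq_mul]
        ring
    _ ≤ _ := Finset.sum_le_sum (fun t _ => hterm t)

end PoolAux

open PoolAux in
/-- In the pool model (P2),
`UBMCI(E) = a·max_t g*_t(E) + b` is monotonically non-increasing in `E` on
`[0, ∞)`; equivalently `E ↦ max_t g*_t(E)` is non-increasing. Here `gstar`
is any selection of optimal generation profiles. -/
theorem pool_ubmci_antitone
    (T : ℕ) (hT : 1 ≤ T) (a b c : ℝ) (ha : 0 < a) (d : Fin T → ℝ)
    (gstar : ℝ → Fin T → ℝ)
    (hgstar : ∀ E : ℝ, 0 ≤ E → ∃ u : Fin T → ℝ, poolFeasible T E u ∧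
      (∀ t, gstar E t = d t + u t) ∧
      poolCost T a b c d u = poolCstar T a b c d E) :
    ∀ E₁ E₂ : ℝ, 0 ≤ E₁ → E₁ ≤ E₂ →
      a * Finset.univ.sup' ⟨⟨0, hT⟩, Finset.mem_univ _⟩ (gstar E₂) + b ≤
        a * Finset.univ.sup' ⟨⟨0, hT⟩, Finset.mem_univ _⟩ (gstar E₁) + b ∧
      Finset.univ.sup' ⟨⟨0, hT⟩, Finset.mem_univ _⟩ (gstar E₂) ≤
        Finset.univ.sup' ⟨⟨0, hT⟩, Finset.mem_univ _⟩ (gstar E₁) := by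
  intro E₁ E₂ h0 hle
  obtain ⟨u₁, hf₁, hg₁, -⟩ := hgstar E₁ h0
  obtain ⟨u₂, hf₂, hg₂, hc₂⟩ := hgstar E₂ (h0.trans hle)
  have hopt : ∀ v, poolFeasible T E₂ v →
      poolCost T a b c d u₂ ≤ poolCost T a b c d v := by
    intro v hv
    rw [hc₂]
    exact csInf_le (cost_bdd T a b c ha d E₂) ⟨v, hv, rfl⟩
  have key : Finset.univ.sup' ⟨⟨0, hT⟩, Finset.mem_univ _⟩ (gstar E₂) ≤
      Finset.univ.sup' ⟨⟨0, hT⟩, Finset.mem_univ _⟩ (gstar E₁) := by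
    apply Finset.sup'_le
    intro t _
    by_contra hcon
    push_neg at hcon
    refine peak T a b c ha d E₁ E₂ hle u₁ u₂ hf₁ hf₂ hopt t ?_
    intro t'
    rw [← hg₁ t', ← hg₂ t]
    exact lt_of_le_of_lt (Finset.le_sup' (gstar E₁) (Finset.mem_univ t')) hcon
  refine ⟨?_, key⟩
  have := mul_le_mul_of_nonneg_left key ha.le
  linarith
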